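/- Define s₀ = 2^{-1/4}, t₀ = 1/2, s_{n+1} = (1−(1−sₙ⁴)^{1/4})/(1+(1−sₙ⁴)^{1/4}), t_{n+1} = (1+s_{n+1})⁴·tₙ − 2^{2n+2}·s_{n+1}(1+s_{n+1}+s_{n+1}²). Then tₙ = r_{2n} where rₙ is the Borwein quadratic sequence, and tₙ → 1/π. -/

import Mathlib

set_option maxHeartbeats 4000000 in
theorem borwein_quartic (a b : ℕ → ℝ) (M : ℝ)
    (ha0 : a 0 = 1) (hb0 : b 0 = 1 / Real.sqrt 2)
    (ha : ∀ n, a (n + 1) = (a n + b n) / 2)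
    (hb : ∀ n, b (n + 1) = Real.sqrt (a n * b n))
    (hMa : Filter.Tendsto a Filter.atTop (nhds M))
    (hMb : Filter.Tendsto b Filter.atTop (nhds M))
    (hGauss : ∑' k : ℕ, (2 : ℝ) ^ k * (a k ^ 2 - b k ^ 2) = 1 - 2 * M ^ 2 / Real.pi)
    (d r : ℕ → ℝ)
    (hd0 : d 0 = 1 / Real.sqrt 2) (hr0 : r 0 = 1 / 2)
    (hd : ∀ n, d (n + 1) =
      (1 - Real.sqrt (1 - d n ^ 2)) / (1 + Real.sqrt (1 - d n ^ 2)))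
    (hr : ∀ n, r (n + 1) = (1 + d (n + 1)) ^ 2 * r n - 2 ^ (n + 1) * d (n + 1))
    (s t : ℕ → ℝ)
    (hs0 : s 0 = (2 : ℝ) ^ (-(1 : ℝ) / 4)) (ht0 : t 0 = 1 / 2)
    (hs : ∀ n, s (n + 1) =
      (1 - (1 - s n ^ 4) ^ ((1 : ℝ) / 4)) / (1 + (1 - s n ^ 4) ^ ((1 : ℝ) / 4)))
    (ht : ∀ n, t (n + 1) = (1 + s (n + 1)) ^ 4 * t n -
      2 ^ (2 * n + 2) * s (n + 1) * (1 + s (n + 1) + s (n + 1) ^ 2)) :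
    (∀ n, t n = r (2 * n)) ∧ Filter.Tendsto t Filter.atTop (nhds (1 / Real.pi)) := by
  have sqrt2_pos : (0:ℝ) < Real.sqrt 2 := Real.sqrt_pos.mpr (by norm_num)
  have sqrt2_sq : Real.sqrt 2 ^ 2 = 2 := Real.sq_sqrt (by norm_num)
  -- basic bounds on the AGM iterates
  have hF : ∀ n, 1/2 ≤ b n ∧ b n ≤ a n ∧ a n ≤ 1 := by
    intro n
    induction n with
    | zero =>
      rw [ha0, hb0]
      constructor
      · rw [div_le_div_iff₀ (by norm_num) sqrt2_pos]; nlinarith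
      constructor
      · rw [div_le_one sqrt2_pos]; nlinarith
      · exact le_refl 1
    | succ n ih =>
      obtain ⟨h1, h2, h3⟩ := ih
      have hbpos : (0:ℝ) < b n := by linarith
      have hapos : (0:ℝ) < a n := by linarith
      have hab : (1:ℝ)/4 ≤ a n * b n := by nlinarith
      refine ⟨?_, ?_, ?_⟩
      · rw [hb]
        have : Real.sqrt (1/4) ≤ Real.sqrt (a n * b n) := Real.sqrt_le_sqrt hab
        have h14 : Real.sqrt ((1:ℝ)/4) = 1/2 := by
          rw [show (1:ℝ)/4 = (1/2)^2 by norm_num, Real.sqrt_sq (by norm_num)]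
        linarith [h14 ▸ this]
      · rw [hb, ha]
        have : Real.sqrt (a n * b n) ≤ Real.sqrt (((a n + b n)/2)^2) :=
          Real.sqrt_le_sqrt (by nlinarith)
        rwa [Real.sqrt_sq (by linarith)] at this
      · rw [ha]; linarith
  have hapos : ∀ n, 0 < a n := fun n => lt_of_lt_of_le (by norm_num) ((hF n).1.trans (hF n).2.1)
  have hbpos : ∀ n, 0 < b n := fun n => lt_of_lt_of_le (by norm_num) (hF n).1
  -- the d invariant
  have hdinv : ∀ n, 1 - d n ^ 2 = (b n / a n) ^ 2 ∧ 0 ≤ d n := by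
    intro n
    induction n with
    | zero =>
      rw [hd0, ha0, hb0]
      constructor
      · rw [div_pow, div_pow, sqrt2_sq]; norm_num
      · positivity
    | succ n ih =>
      have hsq : Real.sqrt (1 - d n ^ 2) = b n / a n := by
        rw [ih.1, Real.sqrt_sq (le_of_lt (div_pos (hbpos n) (hapos n)))]
      have hstep : d (n+1) = (a n - b n) / (a n + b n) := by
        rw [hd n, hsq]
        have h1 : a n ≠ 0 := ne_of_gt (hapos n)
        have h2 : a n + b n ≠ 0 := ne_of_gt (by linarith [hapos n, hbpos n])
        field_simp
      constructor
      · rw [hstep, ha n, hb n]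
        have h2 : a n + b n ≠ 0 := ne_of_gt (by linarith [hapos n, hbpos n])
        have hab : Real.sqrt (a n * b n) ^ 2 = a n * b n :=
          Real.sq_sqrt (le_of_lt (mul_pos (hapos n) (hbpos n)))
        field_simp
        nlinarith [hab]
      · rw [hstep]
        apply div_nonneg
        · linarith [(hF n).2.1]
        · linarith [hapos n, hbpos n]
  have hdsqrt : ∀ n, Real.sqrt (1 - d n ^ 2) = b n / a n := fun n => by
    rw [(hdinv n).1, Real.sqrt_sq (le_of_lt (div_pos (hbpos n) (hapos n)))]
  have hdstep : ∀ n, d (n+1) = (a n - b n) / (a n + b n) := by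
    intro n
    rw [hd n, hdsqrt n]
    have h1 : a n ≠ 0 := ne_of_gt (hapos n)
    have h2 : a n + b n ≠ 0 := ne_of_gt (by linarith [hapos n, hbpos n])
    field_simp
  -- key recurrence
  have hkey : ∀ n, a n ^ 2 * r n =
      1/2 - (1/2) * ∑ k ∈ Finset.range n, (2:ℝ)^k * (a k ^ 2 - b k ^ 2) := by
    intro n
    induction n with
    | zero => simp [ha0, hr0]
    | succ n ih =>
      rw [Finset.sum_range_succ, hr n, hdstep n, ha n]
      have h2 : a n + b n ≠ 0 := ne_of_gt (by linarith [hapos n, hbpos n])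
      have hid : ((a n + b n)/2)^2 * ((1 + (a n - b n)/(a n + b n))^2 * r n -
          2^(n+1) * ((a n - b n)/(a n + b n))) =
          a n ^ 2 * r n - (1/2) * ((2:ℝ)^n * (a n ^ 2 - b n ^ 2)) := by
        field_simp
        ring
      rw [hid]
      rw [ih]
      ring
  -- geometric bound on differences, summability
  have hdiff : ∀ n, a n - b n ≤ (1/4:ℝ)^n := by
    intro n
    induction n with
    | zero =>
      rw [ha0, hb0, pow_zero]
      have : 0 < 1 / Real.sqrt 2 := by positivity
      linarith
    | succ n ih =>
      have hx := Real.sqrt_nonneg (a n)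
      have hy := Real.sqrt_nonneg (b n)
      have hxs : Real.sqrt (a n) ^ 2 = a n := Real.sq_sqrt (le_of_lt (hapos n))
      have hys : Real.sqrt (b n) ^ 2 = b n := Real.sq_sqrt (le_of_lt (hbpos n))
      have hxy : Real.sqrt (b n) ≤ Real.sqrt (a n) := Real.sqrt_le_sqrt (hF n).2.1
      have hmul : Real.sqrt (a n * b n) = Real.sqrt (a n) * Real.sqrt (b n) :=
        Real.sqrt_mul (le_of_lt (hapos n)) _
      have hquarter : a (n+1) - b (n+1) ≤ (1/4) * (a n - b n) := by
        rw [ha n, hb n, hmul]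
        set x := Real.sqrt (a n) with hxdef
        set y := Real.sqrt (b n) with hydef
        have hx1 : x ≤ 1 := by nlinarith [(hF n).2.2]
        have hy1 : y ≤ 1 := le_trans hxy hx1
        have hyhalf : 1/2 ≤ y := by nlinarith [(hF n).1, mul_nonneg hy (sub_nonneg.mpr hy1)]
        have h3y : (0:ℝ) ≤ 3 * y - x := by linarith
        have hprod : (0:ℝ) ≤ (x - y) * (3 * y - x) := mul_nonneg (sub_nonneg.mpr hxy) h3y
        nlinarith [hprod]
      calc a (n+1) - b (n+1) ≤ (1/4) * (a n - b n) := hquarter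
        _ ≤ (1/4) * (1/4:ℝ)^n := by nlinarith
        _ = (1/4:ℝ)^(n+1) := by ring
  have hsummable : Summable (fun k => (2:ℝ)^k * (a k ^ 2 - b k ^ 2)) := by
    apply Summable.of_nonneg_of_le (g := fun k => (2:ℝ)^k * (a k ^ 2 - b k ^ 2))
      (f := fun k => 2 * (1/2:ℝ)^k)
    · intro k
      have h0 : 0 ≤ a k ^ 2 - b k ^ 2 := by nlinarith [(hF k).2.1, hbpos k]
      exact mul_nonneg (by positivity) h0
    · intro k
      have h1 : a k ^ 2 - b k ^ 2 = (a k + b k) * (a k - b k) := by ring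
      have h2 : a k + b k ≤ 2 := by linarith [(hF k).2.2, (hF k).2.1]
      have h3 : 0 ≤ a k - b k := sub_nonneg.mpr (hF k).2.1
      have h4 : (a k + b k) * (a k - b k) ≤ 2 * (1/4:ℝ)^k := by
        have := hdiff k
        nlinarith [hbpos k, hapos k]
      calc (2:ℝ)^k * (a k ^ 2 - b k ^ 2) ≤ (2:ℝ)^k * (2 * (1/4:ℝ)^k) := by
            rw [h1]; apply mul_le_mul_of_nonneg_left h4 (by positivity)
        _ = 2 * (1/2:ℝ)^k := by
            rw [show (1/2:ℝ) = 2 * (1/4) by norm_num, mul_pow]; ring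
    · exact (summable_geometric_of_lt_one (by norm_num) (by norm_num)).mul_left 2
  have hsum : Filter.Tendsto (fun n => ∑ k ∈ Finset.range n, (2:ℝ)^k * (a k ^ 2 - b k ^ 2))
      Filter.atTop (nhds (1 - 2 * M ^ 2 / Real.pi)) := by
    have := hsummable.hasSum
    rw [hGauss] at this
    exact this.tendsto_sum_nat
  -- M is positive
  have hM : (1:ℝ)/2 ≤ M := ge_of_tendsto' hMb (fun n => (hF n).1)
  have hM2 : M ^ 2 ≠ 0 := by positivity
  -- r tends to 1/π
  have hrlim : Filter.Tendsto r Filter.atTop (nhds (1 / Real.pi)) := by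
    have h1 : Filter.Tendsto (fun n => a n ^ 2 * r n) Filter.atTop
        (nhds (1/2 - (1/2) * (1 - 2 * M ^ 2 / Real.pi))) := by
      have : Filter.Tendsto (fun n => 1/2 - (1/2) * ∑ k ∈ Finset.range n,
          (2:ℝ)^k * (a k ^ 2 - b k ^ 2)) Filter.atTop
          (nhds (1/2 - (1/2) * (1 - 2 * M ^ 2 / Real.pi))) :=
        Filter.Tendsto.sub tendsto_const_nhds (hsum.const_mul (1/2))
      exact this.congr (fun n => (hkey n).symm)
    have h2 : Filter.Tendsto (fun n => a n ^ 2) Filter.atTop (nhds (M ^ 2)) := hMa.pow 2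
    have h3 : Filter.Tendsto (fun n => (a n ^ 2 * r n) / a n ^ 2) Filter.atTop
        (nhds ((1/2 - (1/2) * (1 - 2 * M ^ 2 / Real.pi)) / M ^ 2)) := h1.div h2 hM2
    have h4 : (fun n => (a n ^ 2 * r n) / a n ^ 2) = r := by
      funext n
      have hne : a n ^ 2 ≠ 0 := pow_ne_zero 2 (ne_of_gt (hapos n))
      rw [mul_comm, mul_div_assoc, div_self hne, mul_one]
    rw [h4] at h3
    convert h3 using 2
    rw [show 1/2 - (1/2) * (1 - 2 * M ^ 2 / Real.pi) = M ^ 2 / Real.pi by ring,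
      div_right_comm, div_self hM2]
  -- the e-parametrization step
  have hstep : ∀ n, (s n ^ 2 = d (2*n) ∧ 0 ≤ s n ∧ s n ≤ 1) →
      ∃ e : ℝ, 0 ≤ e ∧ e ≤ 1 ∧ s (n+1) = (1-e)/(1+e) ∧
        d (2*n+1) = (1-e^2)/(1+e^2) ∧ d (2*n+1+1) = ((1-e)/(1+e))^2 := by
    intro n ⟨hsn, hsn0, hsn1⟩
    set A := a (2*n) with hA
    set B := b (2*n) with hB
    have hApos : 0 < A := hapos (2*n)
    have hBpos : 0 < B := hbpos (2*n)
    have hBA : B ≤ A := (hF (2*n)).2.1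
    have hBA0 : (0:ℝ) ≤ B / A := le_of_lt (div_pos hBpos hApos)
    set e := Real.sqrt (B / A) with he
    have he0 : 0 ≤ e := Real.sqrt_nonneg _
    have he1 : e ≤ 1 := by
      rw [he, show (1:ℝ) = Real.sqrt 1 by simp]
      exact Real.sqrt_le_sqrt ((div_le_one hApos).mpr hBA)
    have he2 : e ^ 2 = B / A := Real.sq_sqrt hBA0
    have hBAe : B = A * e ^ 2 := by rw [he2]; field_simp
    refine ⟨e, he0, he1, ?_, ?_, ?_⟩
    · -- s (n+1) = (1-e)/(1+e)
      rw [hs n]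
      have h14 : (1 - s n ^ 4) ^ ((1:ℝ)/4) = e := by
        have hs4 : 1 - s n ^ 4 = (B / A) ^ 2 := by
          have : s n ^ 4 = d (2*n) ^ 2 := by rw [← hsn]; ring
          rw [this, (hdinv (2*n)).1]
        rw [hs4, ← Real.rpow_natCast (B/A) 2, ← Real.rpow_mul hBA0,
          show ((2:ℕ):ℝ) * ((1:ℝ)/4) = 1/2 by norm_num, he, Real.sqrt_eq_rpow]
      rw [h14]
    · -- d (2n+1) = (1-e²)/(1+e²)
      rw [hdstep (2*n), ← hA, ← hB, hBAe]
      have h1 : (0:ℝ) < 1 + e^2 := by positivity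
      field_simp
    · -- d (2n+2) = ((1-e)/(1+e))²
      rw [hdstep (2*n+1), ha (2*n), hb (2*n), ← hA, ← hB]
      have hmul : Real.sqrt (A * B) = A * e := by
        rw [hBAe, show A * (A * e^2) = (A*e)^2 by ring,
          Real.sqrt_sq (by positivity)]
      rw [hmul, hBAe]
      have h1 : (0:ℝ) < 1 + e := by linarith
      have h2 : (0:ℝ) < (A + A * e^2)/2 + A * e := by positivity
      field_simp
      ring
  -- the bridge: s n ² = d (2n)
  have hbridge : ∀ n, s n ^ 2 = d (2*n) ∧ 0 ≤ s n ∧ s n ≤ 1 := by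
    intro n
    induction n with
    | zero =>
      refine ⟨?_, by rw [hs0]; positivity, ?_⟩
      · rw [hs0, hd0, ← Real.rpow_natCast ((2:ℝ) ^ (-(1:ℝ)/4)) 2,
          ← Real.rpow_mul (by norm_num : (0:ℝ) ≤ 2),
          show (-(1:ℝ)/4) * ((2:ℕ):ℝ) = -(1/2) by norm_num,
          Real.rpow_neg (by norm_num : (0:ℝ) ≤ 2),
          show ((1:ℝ)/2) = ((2:ℕ):ℝ)⁻¹ * 1 by norm_num]
        rw [show ((2:ℕ):ℝ)⁻¹ * 1 = (1:ℝ)/2 by norm_num, ← Real.sqrt_eq_rpow, one_div]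
      · rw [hs0]
        have : (2:ℝ) ^ (-(1:ℝ)/4) ≤ 2 ^ (0:ℝ) :=
          Real.rpow_le_rpow_of_exponent_le (by norm_num) (by norm_num)
        simpa using this
    | succ n ih =>
      obtain ⟨e, he0, he1, hse, hd1, hd2⟩ := hstep n ih
      have h1e : (0:ℝ) < 1 + e := by linarith
      refine ⟨?_, ?_, ?_⟩
      · rw [show 2*(n+1) = 2*n+1+1 by ring, hd2, hse]
      · rw [hse]; exact div_nonneg (by linarith) (by linarith)
      · rw [hse, div_le_one h1e]; linarith
  -- t n = r (2n)
  have htr : ∀ n, t n = r (2*n) := by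
    intro n
    induction n with
    | zero => rw [ht0, hr0]
    | succ n ih =>
      obtain ⟨e, he0, he1, hse, hd1, hd2⟩ := hstep n (hbridge n)
      have h1e : (0:ℝ) < 1 + e := by linarith
      have h1e2 : (0:ℝ) < 1 + e^2 := by positivity
      rw [ht n, ih, show 2*(n+1) = 2*n+1+1 by ring, hr (2*n+1), hr (2*n), hd1, hd2, hse]
      field_simp
      ring
  refine ⟨htr, ?_⟩
  have h2n : Filter.Tendsto (fun n => 2*n) Filter.atTop Filter.atTop :=
    Filter.tendsto_atTop_atTop.mpr (fun c => ⟨c, fun m hm => by omega⟩)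
  exact (hrlim.comp h2n).congr (fun n => (htr n).symm)
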